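/- Let R be a Bézout domain whose quotient field is algebraically closed. Then for every n ≥ 1, every n×n matrix over R with trace 0 is a commutator, i.e., equals AB − BA for some A, B in Mat_n(R). -/

import Mathlib

open Matrix

section Helpers
variable {R : Type*} [CommRing R]

lemma sum_two {n : ℕ} {p q : Fin n} (hpq : p ≠ q) (f : Fin n → R)
    (hf : ∀ k, k ≠ p → k ≠ q → f k = 0) : ∑ k, f k = f p + f q := by
  classical
  rw [← Finset.sum_subset (Finset.subset_univ {p, q})]
  · rw [Finset.sum_pair hpq]
  · intro x _ hx
    simp only [Finset.mem_insert, Finset.mem_singleton] at hx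
    push_neg at hx
    exact hf x hx.1 hx.2

lemma sum_one {n : ℕ} {p : Fin n} (f : Fin n → R)
    (hf : ∀ k, k ≠ p → f k = 0) : ∑ k, f k = f p := by
  classical
  exact Finset.sum_eq_single p (fun k _ hk => hf k hk) (by simp)

/-- the matrix which is the identity except for a 2×2 block in
rows/columns `p, q`. -/
def tmv {n : ℕ} (p q : Fin n) (x y z w : R) : Matrix (Fin n) (Fin n) R :=
  Matrix.of fun i j =>
    if i = p then (if j = p then x else if j = q then y else 0)
    else if i = q then (if j = p then z else if j = q then w else 0)
    else (if i = j then 1 else 0)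

variable {n : ℕ} {p q : Fin n}

lemma tmv_apply_p {x y z w : R} (j : Fin n) : tmv p q x y z w p j =
    (if j = p then x else if j = q then y else 0) := by
  simp [tmv]

lemma tmv_apply_q (hpq : p ≠ q) {x y z w : R} (j : Fin n) : tmv p q x y z w q j =
    (if j = p then z else if j = q then w else 0) := by
  simp [tmv, Ne.symm hpq]

lemma tmv_apply_other {x y z w : R} {i : Fin n} (hip : i ≠ p) (hiq : i ≠ q) (j : Fin n) :
    tmv p q x y z w i j = (if i = j then 1 else 0) := by
  simp [tmv, hip, hiq]

lemma tmv_mul_tmv (hpq : p ≠ q) (x y z w x' y' z' w' : R) :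
    tmv p q x y z w * tmv p q x' y' z' w' =
      tmv p q (x*x'+y*z') (x*y'+y*w') (z*x'+w*z') (z*y'+w*w') := by
  ext i j
  rw [Matrix.mul_apply]
  by_cases hip : i = p
  · rw [hip]
    rw [sum_two hpq]
    · rw [tmv_apply_p, tmv_apply_p, tmv_apply_p, tmv_apply_q hpq,
        if_pos rfl, if_neg (Ne.symm hpq), if_pos rfl]
      by_cases hjp : j = p
      · rw [hjp]; simp [tmv, hpq, Ne.symm hpq]
      · by_cases hjq : j = q
        · rw [hjq]; simp [tmv, hpq, Ne.symm hpq]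
        · simp [tmv, hpq, Ne.symm hpq, hjp, hjq]
    · intro k hkp hkq
      rw [tmv_apply_p, if_neg hkp, if_neg hkq, zero_mul]
  · by_cases hiq : i = q
    · rw [hiq]
      rw [sum_two hpq]
      · rw [tmv_apply_q hpq, tmv_apply_q hpq, tmv_apply_p, tmv_apply_q hpq,
          if_pos rfl, if_neg (Ne.symm hpq), if_pos rfl]
        by_cases hjp : j = p
        · rw [hjp]; simp [tmv, hpq, Ne.symm hpq]
        · by_cases hjq : j = q
          · rw [hjq]; simp [tmv, hpq, Ne.symm hpq]
          · simp [tmv, hpq, Ne.symm hpq, hjp, hjq]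
      · intro k hkp hkq
        rw [tmv_apply_q hpq, if_neg hkp, if_neg hkq, zero_mul]
    · rw [sum_one (p := i)]
      · rw [tmv_apply_other hip hiq (j:=i), tmv_apply_other hip hiq (j:=j),
          tmv_apply_other hip hiq (j:=j), if_pos rfl, one_mul]
      · intro k hk
        rw [tmv_apply_other hip hiq, if_neg (fun h => hk h.symm), zero_mul]

lemma tmv_one (hpq : p ≠ q) : tmv p q (1:R) 0 0 1 = 1 := by
  ext i j
  by_cases hip : i = p <;> by_cases hiq : i = q <;> by_cases hjp : j = p <;>
    by_cases hjq : j = q <;>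
    simp_all [tmv, Matrix.one_apply, Ne.symm hpq] <;>
    first
      | rfl
      | exact (if_neg (fun h => absurd h.symm (by assumption))).symm
      | (intro h; subst h; simp_all)

lemma tmv_mulVec (hpq : p ≠ q) (x y z w : R) (v : Fin n → R) :
    (tmv p q x y z w).mulVec v = fun i =>
      if i = p then x * v p + y * v q
      else if i = q then z * v p + w * v q else v i := by
  funext i
  rw [Matrix.mulVec, dotProduct]
  by_cases hip : i = p
  · rw [hip, if_pos rfl]
    rw [sum_two hpq]
    · rw [tmv_apply_p, tmv_apply_p, if_pos rfl, if_neg (Ne.symm hpq), if_pos rfl]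
    · intro k hkp hkq
      rw [tmv_apply_p, if_neg hkp, if_neg hkq, zero_mul]
  · rw [if_neg hip]
    by_cases hiq : i = q
    · rw [hiq, if_pos rfl]
      rw [sum_two hpq]
      · rw [tmv_apply_q hpq, tmv_apply_q hpq, if_pos rfl, if_neg (Ne.symm hpq), if_pos rfl]
      · intro k hkp hkq
        rw [tmv_apply_q hpq, if_neg hkp, if_neg hkq, zero_mul]
    · rw [if_neg hiq, sum_one (p := i)]
      · rw [tmv_apply_other hip hiq, if_pos rfl, one_mul]
      · intro k hk
        rw [tmv_apply_other hip hiq, if_neg (fun h => hk h.symm), zero_mul]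

end Helpers

section Bezout
variable {R : Type*} [CommRing R] [IsDomain R] [IsBezout R]

lemma bezout_pair (a b : R) :
    ∃ x y g a' b' : R, x*a + y*b = g ∧ a = g*a' ∧ b = g*b' ∧ x*a' + y*b' = 1 := by
  have hP : (Ideal.span {a, b} : Ideal R).IsPrincipal :=
    (IsBezout.iff_span_pair_isPrincipal.mp inferInstance) a b
  set g := Submodule.IsPrincipal.generator (Ideal.span {a, b} : Ideal R) with hgdef
  have hspan : Ideal.span {g} = Ideal.span {a, b} :=
    Submodule.IsPrincipal.span_singleton_generator _
  have hga : g ∣ a := by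
    rw [← Ideal.mem_span_singleton, hspan]
    exact Ideal.subset_span (by simp)
  have hgb : g ∣ b := by
    rw [← Ideal.mem_span_singleton, hspan]
    exact Ideal.subset_span (by simp)
  have hgm : g ∈ Ideal.span ({a, b} : Set R) := by
    rw [← hspan]
    exact Ideal.subset_span (by simp)
  obtain ⟨x, y, hxy⟩ := Ideal.mem_span_pair.mp hgm
  obtain ⟨a', ha'⟩ := hga
  obtain ⟨b', hb'⟩ := hgb
  by_cases hg : g = 0
  · refine ⟨1, 0, g, 1, 0, ?_, ?_, ?_, ?_⟩
    · rw [hg]; simp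
      rw [ha', hg]; ring
    · rw [ha', hg]; ring
    · rw [hb', hg]; ring
    · ring
  · refine ⟨x, y, g, a', b', hxy, ha', hb', ?_⟩
    apply mul_left_cancel₀ hg
    rw [mul_one]
    nth_rewrite 2 [← hxy]
    rw [ha', hb']; ring

end Bezout


section RV
variable {R : Type*} [CommRing R] [IsDomain R] [IsBezout R]

lemma reduce_vec {n : ℕ} (hn : 0 < n) (v : Fin n → R) :
    ∃ P Q : Matrix (Fin n) (Fin n) R, P * Q = 1 ∧ Q * P = 1 ∧
      ∃ g : R, P.mulVec v = fun i => if i = (⟨0, hn⟩ : Fin n) then g else 0 := by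
  set p0 : Fin n := ⟨0, hn⟩ with hp0
  have key : ∀ k : ℕ, ∀ v : Fin n → R, (∀ j : Fin n, 0 < (j:ℕ) → k ≤ (j:ℕ) → v j = 0) →
      ∃ P Q : Matrix (Fin n) (Fin n) R, P * Q = 1 ∧ Q * P = 1 ∧
        ∃ g : R, P.mulVec v = fun i => if i = p0 then g else 0 := by
    intro k
    induction k with
    | zero =>
      intro v hv
      refine ⟨1, 1, by simp, by simp, v p0, ?_⟩
      rw [Matrix.one_mulVec]
      funext i
      by_cases hi : i = p0
      · rw [if_pos hi, hi]
      · rw [if_neg hi]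
        refine hv i ?_ (Nat.zero_le _)
        have : (i : ℕ) ≠ 0 := fun h => hi (Fin.ext h)
        omega
    | succ k IH =>
      intro v hv
      by_cases hk : 0 < k ∧ k < n
      · set kf : Fin n := ⟨k, hk.2⟩ with hkf
        have hne : p0 ≠ kf := Fin.ne_of_val_ne (by simp [hp0, hkf]; omega)
        obtain ⟨x, y, g, a', b', h1, h2, h3, h4⟩ := bezout_pair (v p0) (v kf)
        set E : Matrix (Fin n) (Fin n) R := tmv p0 kf x y (-b') a' with hE
        set Einv : Matrix (Fin n) (Fin n) R := tmv p0 kf a' (-y) b' x with hEinv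
        have hEE : E * Einv = 1 := by
          rw [hE, hEinv, tmv_mul_tmv hne,
            show x*(-y) + y*x = 0 by ring,
            show (-b')*a' + a'*b' = 0 by ring,
            show (-b')*(-y) + a'*x = 1 by rw [← h4]; ring,
            h4, tmv_one hne]
        have hE2 : Einv * E = 1 := by
          rw [hE, hEinv, tmv_mul_tmv hne,
            show a'*x + (-y)*(-b') = 1 by rw [← h4]; ring,
            show a'*y + (-y)*a' = 0 by ring,
            show b'*x + x*(-b') = 0 by ring,
            show b'*y + x*a' = 1 by rw [← h4]; ring,
            tmv_one hne]
        set w : Fin n → R := E.mulVec v with hw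
        have hwv : w = fun i =>
            if i = p0 then x * v p0 + y * v kf
            else if i = kf then -b' * v p0 + a' * v kf else v i := by
          rw [hw, hE, tmv_mulVec hne]
        have hwz : ∀ j : Fin n, 0 < (j:ℕ) → k ≤ (j:ℕ) → w j = 0 := by
          intro j hj0 hjk
          have hjp0 : j ≠ p0 := fun h => by rw [h] at hj0; simp [hp0] at hj0
          by_cases hjkf : j = kf
          · rw [hwv]
            simp only [if_neg hjp0, if_pos hjkf]
            rw [h2, h3]; ring
          · rw [hwv]
            simp only [if_neg hjp0, if_neg hjkf]
            have : (j:ℕ) ≠ k := fun h => hjkf (Fin.ext (by simp [hkf, h]))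
            exact hv j hj0 (by omega)
        obtain ⟨P', Q', hPQ', hQP', g'', hg''⟩ := IH w hwz
        refine ⟨P' * E, Einv * Q', ?_, ?_, g'', ?_⟩
        · rw [Matrix.mul_assoc, ← Matrix.mul_assoc E, hEE, Matrix.one_mul, hPQ']
        · rw [Matrix.mul_assoc, ← Matrix.mul_assoc Q', hQP', Matrix.one_mul, hE2]
        · rw [← Matrix.mulVec_mulVec, ← hw, hg'']
      · refine IH v (fun j hj0 hjk => ?_)
        rcases Nat.lt_or_ge k 1 with h | h
        · exact hv j hj0 (by omega)
        · rcases Nat.lt_or_ge k n with h' | h'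
          · exact absurd ⟨by omega, h'⟩ hk
          · exact absurd j.isLt (by omega)
  exact key n v (fun j hj0 hjn => absurd j.isLt (by omega))

end RV

section Ext1
variable {R : Type*} [CommRing R] {n : ℕ}

/-- extend a matrix by a 1 in the upper-left corner -/
def ext1 (A : Matrix (Fin n) (Fin n) R) : Matrix (Fin (n+1)) (Fin (n+1)) R :=
  Matrix.of fun i j =>
    if hi : i = 0 then (if j = 0 then 1 else 0)
    else if hj : j = 0 then 0 else A (i.pred hi) (j.pred hj)

@[simp] lemma ext1_zero_zero (A : Matrix (Fin n) (Fin n) R) : ext1 A 0 0 = 1 := by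
  simp [ext1]

@[simp] lemma ext1_zero_succ (A : Matrix (Fin n) (Fin n) R) (j : Fin n) :
    ext1 A 0 j.succ = 0 := by
  simp [ext1, Fin.succ_ne_zero]

@[simp] lemma ext1_succ_zero (A : Matrix (Fin n) (Fin n) R) (i : Fin n) :
    ext1 A i.succ 0 = 0 := by
  simp [ext1, Fin.succ_ne_zero]

@[simp] lemma ext1_succ_succ (A : Matrix (Fin n) (Fin n) R) (i j : Fin n) :
    ext1 A i.succ j.succ = A i j := by
  simp [ext1, Fin.succ_ne_zero]

lemma ext1_mul (A B : Matrix (Fin n) (Fin n) R) :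
    ext1 A * ext1 B = ext1 (A * B) := by
  ext i j
  rw [Matrix.mul_apply, Fin.sum_univ_succ]
  induction i using Fin.cases with
  | zero =>
    induction j using Fin.cases with
    | zero => simp
    | succ j' => simp
  | succ i' =>
    induction j using Fin.cases with
    | zero => simp
    | succ j' => simp [Matrix.mul_apply]

lemma ext1_one : ext1 (1 : Matrix (Fin n) (Fin n) R) = 1 := by
  ext i j
  induction i using Fin.cases with
  | zero =>
    induction j using Fin.cases with
    | zero => simp
    | succ j' => simp [Matrix.one_apply, (Fin.succ_ne_zero j').symm]
  | succ i' =>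
    induction j using Fin.cases with
    | zero => simp [Matrix.one_apply, Fin.succ_ne_zero i']
    | succ j' => simp [Matrix.one_apply, Fin.succ_injective, Fin.succ_inj]

lemma ext1_conj_succ_zero (A B : Matrix (Fin n) (Fin n) R)
    (M : Matrix (Fin (n+1)) (Fin (n+1)) R) (hM : ∀ i : Fin n, M i.succ 0 = 0) (i : Fin n) :
    (ext1 A * M * ext1 B) i.succ 0 = 0 := by
  rw [Matrix.mul_apply, Fin.sum_univ_succ]
  have h1 : (ext1 A * M) i.succ 0 = 0 := by
    rw [Matrix.mul_apply, Fin.sum_univ_succ]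
    simp [hM]
  simp [h1, Fin.succ_ne_zero]

lemma ext1_conj_succ_succ (A B : Matrix (Fin n) (Fin n) R)
    (M : Matrix (Fin (n+1)) (Fin (n+1)) R) (i j : Fin n) :
    (ext1 A * M * ext1 B) i.succ j.succ =
      (A * (M.submatrix Fin.succ Fin.succ) * B) i j := by
  conv_rhs => rw [Matrix.mul_apply]
  rw [Matrix.mul_apply, Fin.sum_univ_succ]
  simp only [ext1_succ_zero, ext1_zero_succ, ext1_succ_succ, mul_zero, zero_add]
  refine Finset.sum_congr rfl (fun l _ => ?_)
  congr 1
  rw [Matrix.mul_apply, Fin.sum_univ_succ, Matrix.mul_apply]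
  simp only [ext1_succ_zero, ext1_zero_succ, ext1_succ_succ, zero_mul, zero_add, Matrix.submatrix_apply]

end Ext1


section Eigen
variable (R : Type*) [CommRing R] [IsDomain R] [IsBezout R] [IsAlgClosed (FractionRing R)]

lemma exists_eigen {n : ℕ} (M : Matrix (Fin (n+1)) (Fin (n+1)) R) :
    ∃ (lam : R) (v : Fin (n+1) → R), v ≠ 0 ∧ M.mulVec v = lam • v := by
  classical
  letI : GCDMonoid R := IsBezout.toGCDDomain R
  haveI : IsIntegrallyClosed R := GCDMonoid.toIsIntegrallyClosed
  set K := FractionRing R with hK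
  set f : R →+* K := algebraMap R K with hf
  have hfinj : Function.Injective f := IsFractionRing.injective R K
  set MK : Matrix (Fin (n+1)) (Fin (n+1)) K := M.map f with hMK
  have hdeg : MK.charpoly.degree ≠ 0 := by
    rw [Matrix.charpoly_degree_eq_dim]
    simp only [Fintype.card_fin]
    exact_mod_cast Nat.succ_ne_zero n
  obtain ⟨mu, hmu⟩ := IsAlgClosed.exists_root MK.charpoly hdeg
  have hint : IsIntegral R mu := by
    refine ⟨M.charpoly, M.charpoly_monic, ?_⟩
    rw [← Polynomial.eval_map, ← Matrix.charpoly_map M f]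
    exact hmu
  obtain ⟨lam, hlam⟩ := IsIntegrallyClosed.isIntegral_iff.mp hint
  -- eigenvector over K
  have hdet : (mu • (1 : Matrix (Fin (n+1)) (Fin (n+1)) K) - MK).det = 0 := by
    have hmap : (charmatrix MK).map (Polynomial.evalRingHom mu) =
        mu • (1 : Matrix (Fin (n+1)) (Fin (n+1)) K) - MK := by
      ext i j
      by_cases hij : i = j
      · subst hij
        simp [charmatrix_apply_eq]
      · simp [charmatrix_apply_ne _ _ _ hij, Matrix.one_apply_ne hij, hij]
    have h3 := (RingHom.map_det (Polynomial.evalRingHom mu) (charmatrix MK))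
    rw [RingHom.mapMatrix_apply, hmap] at h3
    rw [← h3]
    simpa [Matrix.charpoly, Polynomial.coe_evalRingHom] using hmu
  obtain ⟨w, hw0, hww⟩ := (Matrix.exists_mulVec_eq_zero_iff).mpr hdet
  have hMw : MK.mulVec w = fun i => mu * w i := by
    funext i
    have := congrFun hww i
    rw [Matrix.sub_mulVec] at this
    have h2 : (mu • (1 : Matrix (Fin (n+1)) (Fin (n+1)) K)).mulVec w i = mu * w i := by
      rw [Matrix.smul_mulVec, Matrix.one_mulVec]
      simp
    rw [Pi.sub_apply, h2, Pi.zero_apply] at this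
    exact (sub_eq_zero.mp this).symm
  obtain ⟨b, hb⟩ := IsLocalization.exist_integer_multiples_of_finite (nonZeroDivisors R) w
  choose v hv using hb
  have hbne : f (b : R) ≠ 0 := by
    have hb0 : (b : R) ≠ 0 := nonZeroDivisors.coe_ne_zero b
    exact fun h => hb0 (hfinj (by rw [h, map_zero]))
  refine ⟨lam, v, ?_, ?_⟩
  · obtain ⟨i, hi⟩ := Function.ne_iff.mp hw0
    intro hv0
    apply hi
    have h := hv i
    rw [congrFun hv0 i, Pi.zero_apply, map_zero, Algebra.smul_def] at h
    rcases mul_eq_zero.mp h.symm with h' | h'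
    · exact absurd h' hbne
    · exact h'
  · funext i
    apply hfinj
    have lhs : f ((M *ᵥ v) i) = f (b:R) * (mu * w i) := by
      rw [Matrix.mulVec, dotProduct, map_sum]
      have hterm : ∀ j, f (M i j * v j) = MK i j * (f (b:R) * w j) := fun j => by
        rw [_root_.map_mul, hv j, Algebra.smul_def, hMK, Matrix.map_apply]
      rw [Finset.sum_congr rfl (fun j _ => hterm j)]
      have hpull : ∑ j, MK i j * (f (b:R) * w j) = f (b:R) * ∑ j, MK i j * w j := by
        rw [Finset.mul_sum]; exact Finset.sum_congr rfl (fun j _ => by ring)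
      rw [hpull]
      congr 1
      have h4 := congrFun hMw i
      rw [← h4, Matrix.mulVec, dotProduct]
    have rhs : f ((lam • v) i) = f (b:R) * (mu * w i) := by
      rw [Pi.smul_apply, smul_eq_mul, _root_.map_mul, hlam, hv i, Algebra.smul_def]
      ring
    rw [lhs, rhs]

end Eigen


section Tri
variable (R : Type*) [CommRing R] [IsDomain R] [IsBezout R] [IsAlgClosed (FractionRing R)]

theorem triangularize : ∀ (n : ℕ) (M : Matrix (Fin n) (Fin n) R),
    ∃ P Q : Matrix (Fin n) (Fin n) R,
      P * Q = 1 ∧ Q * P = 1 ∧ ∀ i j : Fin n, j < i → (P * M * Q) i j = 0 := by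
  intro n
  induction n with
  | zero =>
    intro M
    exact ⟨1, 1, by simp, by simp, fun i j h => i.elim0⟩
  | succ n IH =>
    intro M
    obtain ⟨lam, v, hv, heig⟩ := exists_eigen R M
    obtain ⟨P₁, Q₁, hPQ₁, hQP₁, g, hg⟩ := reduce_vec (Nat.succ_pos n) v
    have hz : (⟨0, Nat.succ_pos n⟩ : Fin (n+1)) = 0 := rfl
    rw [hz] at hg
    set M₁ := P₁ * M * Q₁ with hM₁def
    have hgne : g ≠ 0 := by
      intro h
      apply hv
      have h1 : P₁.mulVec v = 0 := by
        rw [hg]; funext i; simp [h]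
      have hv0 : Q₁.mulVec (P₁.mulVec v) = v := by
        rw [Matrix.mulVec_mulVec, hQP₁, Matrix.one_mulVec]
      rw [h1, Matrix.mulVec_zero] at hv0
      exact hv0.symm
    have hM₁v : M₁.mulVec (P₁.mulVec v) = lam • (P₁.mulVec v) := by
      rw [Matrix.mulVec_mulVec, hM₁def, Matrix.mul_assoc (P₁ * M), hQP₁,
        Matrix.mul_one, ← Matrix.mulVec_mulVec, heig, Matrix.mulVec_smul]
    have hcol : ∀ i : Fin (n+1), i ≠ 0 → M₁ i 0 = 0 := by
      intro i hi
      have h2 := congrFun hM₁v i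
      rw [hg] at h2
      have hL : M₁.mulVec (fun i => if i = 0 then g else 0) i = M₁ i 0 * g := by
        rw [Matrix.mulVec, dotProduct]
        rw [sum_one (p := (0 : Fin (n+1)))]
        · rw [if_pos rfl]
        · intro k hk
          rw [if_neg hk, mul_zero]
      rw [hL] at h2
      have hR : (lam • fun i => if i = (0:Fin (n+1)) then g else 0) i = 0 := by
        rw [Pi.smul_apply, if_neg hi, smul_eq_mul, mul_zero]
      rw [hR] at h2
      rcases mul_eq_zero.mp h2 with h' | h'
      · exact h'
      · exact absurd h' hgne
    set N := M₁.submatrix Fin.succ Fin.succ with hN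
    obtain ⟨P₂, Q₂, hPQ₂, hQP₂, hUT⟩ := IH N
    refine ⟨ext1 P₂ * P₁, Q₁ * ext1 Q₂, ?_, ?_, ?_⟩
    · rw [Matrix.mul_assoc, ← Matrix.mul_assoc P₁, hPQ₁, Matrix.one_mul,
        ext1_mul, hPQ₂, ext1_one]
    · rw [Matrix.mul_assoc, ← Matrix.mul_assoc (ext1 Q₂), ext1_mul, hQP₂,
        ext1_one, Matrix.one_mul, hQP₁]
    · have hassoc : ext1 P₂ * P₁ * M * (Q₁ * ext1 Q₂) = ext1 P₂ * M₁ * ext1 Q₂ := by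
        rw [hM₁def]
        simp only [Matrix.mul_assoc]
      intro i j hij
      rw [hassoc]
      induction i using Fin.cases with
      | zero => exact absurd hij (by simp [Fin.lt_def])
      | succ i' =>
        induction j using Fin.cases with
        | zero =>
          exact ext1_conj_succ_zero P₂ Q₂ M₁ (fun k => hcol k.succ (Fin.succ_ne_zero k)) i'
        | succ j' =>
          rw [ext1_conj_succ_succ]
          exact hUT i' j' (Fin.succ_lt_succ_iff.mp hij)

end Tri

section Comm
variable {R : Type*} [CommRing R]

lemma sum_oneX {n : ℕ} {p : Fin n} (f : Fin n → R)
    (hf : ∀ k, k ≠ p → f k = 0) : ∑ k, f k = f p := by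
  classical
  exact Finset.sum_eq_single p (fun k _ hk => hf k hk) (by simp)

/-- zero-extension of a matrix to ℕ×ℕ indices -/
def textend {n : ℕ} (T : Matrix (Fin n) (Fin n) R) (i j : ℕ) : R :=
  if h : i < n ∧ j < n then T ⟨i, h.1⟩ ⟨j, h.2⟩ else 0

/-- partial diagonal sums used to build the commutator witness -/
def spart {n : ℕ} (T : Matrix (Fin n) (Fin n) R) (i j : ℕ) : R :=
  ∑ m ∈ Finset.range n, if m < i ∧ i ≤ m + j + 1 then textend T m (m+j+1-i) else 0

variable {n : ℕ} {T : Matrix (Fin n) (Fin n) R}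

lemma textend_coe (i j : Fin n) : textend T (i:ℕ) (j:ℕ) = T i j := by
  unfold textend
  rw [dif_pos ⟨i.isLt, j.isLt⟩]

lemma textend_lower (hUT : ∀ i j : Fin n, j < i → T i j = 0)
    {i j : ℕ} (hij : j < i) : textend T i j = 0 := by
  unfold textend
  split
  · next h => exact hUT _ _ (by simpa [Fin.lt_def] using hij)
  · rfl

lemma spart_succ (i j : ℕ) (hi : i < n) (hj : 1 ≤ j) :
    spart T (i+1) j = spart T i (j-1) + textend T i j := by
  unfold spart
  have hsplit : ∀ m : ℕ,
      (if m < i+1 ∧ i+1 ≤ m + j + 1 then textend T m (m+j+1-(i+1)) else 0) =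
      (if m < i ∧ i ≤ m + (j-1) + 1 then textend T m (m+(j-1)+1-i) else 0) +
      (if m = i then textend T i j else 0) := by
    intro m
    rcases Nat.lt_trichotomy m i with hm | hm | hm
    · rw [if_neg (by omega : ¬ m = i), add_zero]
      by_cases hc : i ≤ m + j
      · rw [if_pos ⟨by omega, by omega⟩, if_pos ⟨hm, by omega⟩]
        congr 1
        omega
      · rw [if_neg (by omega), if_neg (by omega)]
    · subst hm
      rw [if_pos ⟨by omega, by omega⟩, if_neg (by omega), if_pos rfl, zero_add]
      congr 1
      omega
    · rw [if_neg (by omega), if_neg (by omega), if_neg (by omega), add_zero]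
  rw [Finset.sum_congr rfl (fun m _ => hsplit m), Finset.sum_add_distrib]
  congr 1
  rw [Finset.sum_ite_eq' (Finset.range n) i (fun _ => textend T i j)]
  rw [if_pos (Finset.mem_range.mpr hi)]

lemma spart_succ_zero (i : ℕ) (hi : i < n) :
    spart T (i+1) 0 = textend T i 0 := by
  unfold spart
  have hsplit : ∀ m : ℕ,
      (if m < i+1 ∧ i+1 ≤ m + 0 + 1 then textend T m (m+0+1-(i+1)) else 0) =
      (if m = i then textend T i 0 else 0) := by
    intro m
    rcases Nat.lt_trichotomy m i with hm | hm | hm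
    · rw [if_neg (by omega), if_neg (by omega)]
    · subst hm
      rw [if_pos ⟨by omega, by omega⟩, if_pos rfl]
      congr 1
      omega
    · rw [if_neg (by omega), if_neg (by omega)]
  rw [Finset.sum_congr rfl (fun m _ => hsplit m)]
  rw [Finset.sum_ite_eq' (Finset.range n) i (fun _ => textend T i 0)]
  rw [if_pos (Finset.mem_range.mpr hi)]

lemma spart_top (hUT : ∀ i j : Fin n, j < i → T i j = 0) (htr : T.trace = 0)
    (j : ℕ) (hj : j < n) : spart T n j = 0 := by
  unfold spart
  by_cases hjn : j + 1 = n
  · have hterm : ∀ m ∈ Finset.range n,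
        (if m < n ∧ n ≤ m + j + 1 then textend T m (m+j+1-n) else 0) = textend T m m := by
      intro m hm
      rw [Finset.mem_range] at hm
      rw [if_pos ⟨hm, by omega⟩]
      congr 1
      omega
    rw [Finset.sum_congr rfl hterm]
    have : ∑ m ∈ Finset.range n, textend T m m = ∑ i : Fin n, T i i := by
      rw [← Fin.sum_univ_eq_sum_range]
      refine Finset.sum_congr rfl (fun i _ => ?_)
      unfold textend
      rw [dif_pos ⟨i.isLt, i.isLt⟩]
    rw [this]
    exact htr
  · refine Finset.sum_eq_zero (fun m hm => ?_)
    rw [Finset.mem_range] at hm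
    split
    · next h =>
      refine textend_lower hUT ?_
      omega
    · rfl

/-- the upper shift matrix -/
def shiftU (n : ℕ) : Matrix (Fin n) (Fin n) R :=
  Matrix.of fun i j => if (j:ℕ) = (i:ℕ) + 1 then 1 else 0

theorem ut_commutator (hUT : ∀ i j : Fin n, j < i → T i j = 0) (htr : T.trace = 0) :
    ∃ A B : Matrix (Fin n) (Fin n) R, T = A * B - B * A := by
  classical
  set B : Matrix (Fin n) (Fin n) R := Matrix.of fun i j => spart T (i:ℕ) (j:ℕ) with hB
  refine ⟨shiftU n, B, ?_⟩
  ext i j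
  have hAB : ((shiftU n : Matrix (Fin n) (Fin n) R) * B) i j = spart T ((i:ℕ)+1) (j:ℕ) := by
    rw [Matrix.mul_apply]
    by_cases hi : (i:ℕ)+1 < n
    · rw [sum_oneX (p := ⟨(i:ℕ)+1, hi⟩)]
      · simp only [shiftU, Matrix.of_apply, hB]
        simp
      · intro k hk
        simp only [shiftU, Matrix.of_apply]
        rw [if_neg (fun h => hk (Fin.ext h)), zero_mul]
    · have hin : (i:ℕ)+1 = n := by have := i.isLt; omega
      rw [Finset.sum_eq_zero, hin, spart_top hUT htr _ j.isLt]
      intro k _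
      simp only [shiftU, Matrix.of_apply]
      rw [if_neg (by have := k.isLt; omega), zero_mul]
  have hBA : (B * (shiftU n : Matrix (Fin n) (Fin n) R)) i j =
      if (j:ℕ) = 0 then 0 else spart T (i:ℕ) ((j:ℕ)-1) := by
    rw [Matrix.mul_apply]
    by_cases hj : (j:ℕ) = 0
    · rw [if_pos hj]
      refine Finset.sum_eq_zero (fun k _ => ?_)
      simp only [shiftU, Matrix.of_apply]
      rw [if_neg (by omega), mul_zero]
    · rw [if_neg hj]
      have hj1 : (j:ℕ)-1 < n := by have := j.isLt; omega
      rw [sum_oneX (p := ⟨(j:ℕ)-1, hj1⟩)]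
      · simp only [shiftU, Matrix.of_apply, hB]
        rw [if_pos (by omega), mul_one]
      · intro k hk
        simp only [shiftU, Matrix.of_apply]
        refine (if_neg (fun h => hk (Fin.ext ?_))).symm ▸ mul_zero _
        simp only [Fin.val_mk]
        omega
  rw [Matrix.sub_apply, hAB, hBA]
  by_cases hj : (j:ℕ) = 0
  · rw [if_pos hj, sub_zero, hj, spart_succ_zero _ i.isLt, ← hj, textend_coe]
  · rw [if_neg hj, spart_succ _ _ i.isLt (by omega), add_sub_cancel_left, textend_coe]
end Comm


/-- Let `R` be a Bézout domain whose quotient field is algebraically closed. Then for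
every `n ≥ 1`, every `n × n` trace-0 matrix over `R` is a commutator. -/
theorem stmt4 (R : Type*) [CommRing R] [IsDomain R] [IsBezout R]
    [IsAlgClosed (FractionRing R)]
    (n : ℕ) (hn : 1 ≤ n) (M : Matrix (Fin n) (Fin n) R) (htr : M.trace = 0) :
    ∃ A B : Matrix (Fin n) (Fin n) R, M = A * B - B * A := by
  obtain ⟨P, Q, hPQ, hQP, hUT⟩ := triangularize R n M
  set T := P * M * Q with hT
  have htrT : T.trace = 0 := by
    rw [hT, Matrix.trace_mul_comm, ← Matrix.mul_assoc, hQP, Matrix.one_mul, htr]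
  obtain ⟨A, B, hABT⟩ := ut_commutator hUT htrT
  have hM : M = Q * T * P := by
    rw [hT]
    calc M = (Q * P) * M * (Q * P) := by rw [hQP, Matrix.one_mul, Matrix.mul_one]
    _ = Q * (P * M * Q) * P := by simp only [Matrix.mul_assoc]
  have key : ∀ X Y : Matrix (Fin n) (Fin n) R, (Q*X*P)*(Q*Y*P) = Q*(X*Y)*P := by
    intro X Y
    calc (Q*X*P)*(Q*Y*P) = Q*(X*((P*Q)*(Y*P))) := by simp only [Matrix.mul_assoc]
    _ = Q*(X*Y)*P := by rw [hPQ, Matrix.one_mul]; simp only [Matrix.mul_assoc]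
  refine ⟨Q * A * P, Q * B * P, ?_⟩
  rw [hM, hABT, key, key, Matrix.mul_sub, Matrix.sub_mul]
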